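/- Let s₀, s₁, s₂ ∈ ℝ² with s₁ ≠ s₀ ≠ s₂, and let Z₀ = {p ∈ ℝ² \ {s₀,s₁,s₂} : dist(s₀,p)^{-2} ≥ dist(s₁,p)^{-2} + dist(s₂,p)^{-2}} ∪ {s₀}. Then Z₀ is convex. -/

import Mathlib

/-- The squared-distance difference to two fixed points is affine along segments. -/
lemma stmt8_aux_affine {E : Type*} [NormedAddCommGroup E] [InnerProductSpace ℝ E]
    (s s₀ p q : E) (a b : ℝ) (hab : a + b = 1) :
    dist s (a•p + b•q)^2 - dist s₀ (a•p+b•q)^2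
      = a*(dist s p^2 - dist s₀ p^2) + b*(dist s q^2 - dist s₀ q^2) := by
  have expand : ∀ u v : E, dist u v ^ 2 = ‖u‖^2 - 2 * (inner ℝ u v : ℝ) + ‖v‖^2 := by
    intro u v; rw [dist_eq_norm, norm_sub_sq_real]
  simp only [expand, inner_add_right, real_inner_smul_right]
  linear_combination (‖s₀‖^2 - ‖s‖^2) * hab

/-- Squared distance is convex along segments. -/
lemma stmt8_aux_convex {E : Type*} [NormedAddCommGroup E] [InnerProductSpace ℝ E]
    (s₀ p q : E) (a b : ℝ) (ha : 0 ≤ a) (hb : 0 ≤ b) (hab : a + b = 1) :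
    dist s₀ (a•p + b•q)^2 ≤ a * dist s₀ p^2 + b * dist s₀ q^2 := by
  have h0 : s₀ - (a•p + b•q) = a•(s₀ - p) + b•(s₀ - q) := by
    match_scalars <;> linarith
  have h1 : dist s₀ (a•p + b•q) ≤ a * dist s₀ p + b * dist s₀ q := by
    rw [dist_eq_norm, h0, dist_eq_norm, dist_eq_norm]
    calc ‖a•(s₀-p) + b•(s₀-q)‖ ≤ ‖a•(s₀-p)‖ + ‖b•(s₀-q)‖ := norm_add_le _ _
      _ = a*‖s₀-p‖ + b*‖s₀-q‖ := by
          rw [norm_smul, norm_smul, Real.norm_of_nonneg ha, Real.norm_of_nonneg hb]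
  nlinarith [dist_nonneg (x := s₀) (y := p), dist_nonneg (x := s₀) (y := q),
    mul_nonneg ha hb, sq_nonneg (dist s₀ p - dist s₀ q), dist_nonneg (x := s₀) (y := a•p+b•q)]

set_option maxHeartbeats 1000000 in
theorem stmt8 (s₀ s₁ s₂ : EuclideanSpace ℝ (Fin 2)) (h₁ : s₁ ≠ s₀) (h₂ : s₂ ≠ s₀)
    (Z₀ : Set (EuclideanSpace ℝ (Fin 2)))
    (hZ : Z₀ = {p | p ∉ ({s₀, s₁, s₂} : Set (EuclideanSpace ℝ (Fin 2))) ∧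
        (dist s₁ p ^ 2)⁻¹ + (dist s₂ p ^ 2)⁻¹ ≤ (dist s₀ p ^ 2)⁻¹} ∪ {s₀}) :
    Convex ℝ Z₀ := by
  -- Characterization of the zone by polynomial inequalities
  have hchar : ∀ x, x ∈ Z₀ ↔
      (dist s₀ x ^ 2 ≤ dist s₁ x ^ 2 ∧ dist s₀ x ^ 2 ≤ dist s₂ x ^ 2 ∧
        (dist s₀ x ^ 2) ^ 2 ≤ (dist s₁ x ^ 2 - dist s₀ x ^ 2) * (dist s₂ x ^ 2 - dist s₀ x ^ 2)) := by
    intro x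
    subst hZ
    constructor
    · rintro (⟨hx, hle⟩ | hx)
      · simp only [Set.mem_insert_iff, Set.mem_singleton_iff, not_or] at hx
        obtain ⟨hx0, hx1, hx2⟩ := hx
        have d0 : 0 < dist s₀ x ^ 2 := by
          have : dist s₀ x ≠ 0 := fun h => hx0 ((dist_eq_zero.mp h).symm ▸ rfl)
          positivity
        have d1 : 0 < dist s₁ x ^ 2 := by
          have : dist s₁ x ≠ 0 := fun h => hx1 ((dist_eq_zero.mp h).symm ▸ rfl)
          positivity
        have d2 : 0 < dist s₂ x ^ 2 := by
          have : dist s₂ x ≠ 0 := fun h => hx2 ((dist_eq_zero.mp h).symm ▸ rfl)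
          positivity
        rw [inv_add_inv (ne_of_gt d1) (ne_of_gt d2), inv_eq_one_div,
          div_le_div_iff₀ (by positivity) (by positivity)] at hle
        refine ⟨?_, ?_, ?_⟩
        · nlinarith [mul_pos d0 d1, mul_pos d0 d2]
        · nlinarith [mul_pos d0 d1, mul_pos d0 d2]
        · nlinarith
      · simp only [Set.mem_singleton_iff] at hx
        subst hx
        simp only [dist_self]
        have e1 : (0:ℝ) < dist s₁ x ^ 2 := by
          have : dist s₁ x ≠ 0 := fun h => h₁ (dist_eq_zero.mp h)
          positivity
        have e2 : (0:ℝ) < dist s₂ x ^ 2 := by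
          have : dist s₂ x ≠ 0 := fun h => h₂ (dist_eq_zero.mp h)
          positivity
        exact ⟨by nlinarith [e1], by nlinarith [e2], by nlinarith [mul_pos e1 e2]⟩
    · rintro ⟨hL1, hL2, hQ⟩
      by_cases hx0 : x = s₀
      · right; simp [hx0]
      · left
        have d0 : 0 < dist s₀ x ^ 2 := by
          have : dist s₀ x ≠ 0 := fun h => hx0 (dist_eq_zero.mp h).symm
          positivity
        have d1 : 0 < dist s₁ x ^ 2 := lt_of_lt_of_le d0 hL1
        have d2 : 0 < dist s₂ x ^ 2 := lt_of_lt_of_le d0 hL2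
        constructor
        · simp only [Set.mem_insert_iff, Set.mem_singleton_iff, not_or]
          refine ⟨fun h => hx0 h, fun h => ?_, fun h => ?_⟩
          · rw [h, dist_self] at d1; norm_num at d1
          · rw [h, dist_self] at d2; norm_num at d2
        · rw [inv_add_inv (ne_of_gt d1) (ne_of_gt d2), inv_eq_one_div,
            div_le_div_iff₀ (by positivity) (by positivity)]
          nlinarith
  -- Now prove convexity using the characterization
  intro p hp q hq a b ha hb hab
  rw [hchar] at hp hq ⊢
  obtain ⟨hp1, hp2, hpQ⟩ := hp
  obtain ⟨hq1, hq2, hqQ⟩ := hq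
  set z := a • p + b • q with hzdef
  have aff1 := stmt8_aux_affine s₁ s₀ p q a b hab
  have aff2 := stmt8_aux_affine s₂ s₀ p q a b hab
  have cvx := stmt8_aux_convex s₀ p q a b ha hb hab
  set A1 := dist s₁ p ^ 2 - dist s₀ p ^ 2 with hA1
  set A2 := dist s₂ p ^ 2 - dist s₀ p ^ 2 with hA2
  set B1 := dist s₁ q ^ 2 - dist s₀ q ^ 2 with hB1
  set B2 := dist s₂ q ^ 2 - dist s₀ q ^ 2 with hB2
  set Qp := dist s₀ p ^ 2 with hQp
  set Qq := dist s₀ q ^ 2 with hQq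
  have hA1n : 0 ≤ A1 := by simp [hA1]; linarith
  have hA2n : 0 ≤ A2 := by simp [hA2]; linarith
  have hB1n : 0 ≤ B1 := by simp [hB1]; linarith
  have hB2n : 0 ≤ B2 := by simp [hB2]; linarith
  have hQpn : 0 ≤ Qp := by positivity
  have hQqn : 0 ≤ Qq := by positivity
  have hQzn : 0 ≤ dist s₀ z ^ 2 := by positivity
  -- geometric mean inequality: 2 Qp Qq ≤ A1 B2 + A2 B1
  have hgm : 2 * (Qp * Qq) ≤ A1 * B2 + A2 * B1 := by
    have hprod : (Qp * Qq)^2 ≤ (A1 * B2) * (A2 * B1) := by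
      calc (Qp * Qq)^2 = Qp^2 * Qq^2 := by ring
        _ ≤ (A1 * A2) * (B1 * B2) := by
            apply mul_le_mul hpQ hqQ (by positivity) (by positivity)
        _ = (A1 * B2) * (A2 * B1) := by ring
    have hsum2 : 0 ≤ A1*B2 + A2*B1 :=
      add_nonneg (mul_nonneg hA1n hB2n) (mul_nonneg hA2n hB1n)
    have h2u : 0 ≤ 2*(Qp*Qq) := by positivity
    have h4 : (2*(Qp*Qq))^2 ≤ (A1*B2 + A2*B1)^2 := by
      nlinarith [sq_nonneg (A1*B2 - A2*B1)]
    nlinarith [h4, hsum2, h2u]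
  have key : (a * Qp + b * Qq)^2 ≤ (a*A1 + b*B1) * (a*A2 + b*B2) := by
    nlinarith [mul_nonneg ha hb, mul_nonneg (mul_nonneg ha ha) (sub_nonneg.2 hpQ),
      mul_nonneg (mul_nonneg hb hb) (sub_nonneg.2 hqQ),
      mul_nonneg (mul_nonneg ha hb) (sub_nonneg.2 hgm)]
  refine ⟨?_, ?_, ?_⟩
  · have : dist s₁ z ^ 2 - dist s₀ z ^ 2 = a * A1 + b * B1 := aff1
    nlinarith [mul_nonneg ha hA1n, mul_nonneg hb hB1n]
  · have : dist s₂ z ^ 2 - dist s₀ z ^ 2 = a * A2 + b * B2 := aff2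
    nlinarith [mul_nonneg ha hA2n, mul_nonneg hb hB2n]
  · have e1 : dist s₁ z ^ 2 - dist s₀ z ^ 2 = a * A1 + b * B1 := aff1
    have e2 : dist s₂ z ^ 2 - dist s₀ z ^ 2 = a * A2 + b * B2 := aff2
    rw [e1, e2]
    calc (dist s₀ z ^ 2)^2 ≤ (a * Qp + b * Qq)^2 := by
          apply pow_le_pow_left₀ hQzn cvx
      _ ≤ (a*A1 + b*B1) * (a*A2 + b*B2) := key
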